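/- Let θ ∈ ℝ, let ψ = (sin(πθ), cos(πθ))ᵀ ∈ ℂ², let Z = diag(1, −1), and let G = (I − 2·ψψ†)·Z. Then the unit vectors v₊ = (1/√2)·(1, i)ᵀ and v₋ = (1/√2)·(1, −i)ᵀ are eigenvectors of G with eigenvalues e^{2πiθ} and e^{−2πiθ} respectively: G·v₊ = e^{2πiθ}·v₊ and G·v₋ = e^{−2πiθ}·v₋. (These are the eigenvalues and eigenstates of the operator G̃_k computed in the Appendix, which the QADC phase estimation estimates.) -/
import Mathlib


open Matrix Real

noncomputable section

/-- **Eigenvalues and eigenstates of `G̃_k` (Appendix).**  For `ψ = (sin πθ, cos πθ)ᵀ`,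
`Z = diag(1, -1)` and `G = (I - 2ψψ†) Z`, the unit vectors `v₊ = (1/√2)(1, i)ᵀ` and
`v₋ = (1/√2)(1, -i)ᵀ` satisfy `G v₊ = e^{2πiθ} v₊` and `G v₋ = e^{-2πiθ} v₋`. -/
theorem grover_iterate_eigenvectors (θ : ℝ) :
    (((1 : Matrix (Fin 2) (Fin 2) ℂ)
          - (2 : ℂ) • Matrix.vecMulVec ![(Real.sin (π * θ) : ℂ), (Real.cos (π * θ) : ℂ)]
              (star ![(Real.sin (π * θ) : ℂ), (Real.cos (π * θ) : ℂ)]))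
        * !![1, 0; 0, -1]).mulVec
        (((1 / Real.sqrt 2 : ℝ) : ℂ) • ![1, Complex.I])
      = Complex.exp (2 * π * θ * Complex.I) •
          (((1 / Real.sqrt 2 : ℝ) : ℂ) • ![1, Complex.I]) ∧
    (((1 : Matrix (Fin 2) (Fin 2) ℂ)
          - (2 : ℂ) • Matrix.vecMulVec ![(Real.sin (π * θ) : ℂ), (Real.cos (π * θ) : ℂ)]
              (star ![(Real.sin (π * θ) : ℂ), (Real.cos (π * θ) : ℂ)]))
        * !![1, 0; 0, -1]).mulVec
        (((1 / Real.sqrt 2 : ℝ) : ℂ) • ![1, -Complex.I])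
      = Complex.exp (-(2 * π * θ * Complex.I)) •
          (((1 / Real.sqrt 2 : ℝ) : ℂ) • ![1, -Complex.I]) := by
  set s : ℂ := (Real.sin (π * θ) : ℂ) with hs
  set c : ℂ := (Real.cos (π * θ) : ℂ) with hc
  set k : ℂ := ((1 / Real.sqrt 2 : ℝ) : ℂ) with hk
  have hsc : s ^ 2 + c ^ 2 = 1 := by
    rw [hs, hc]; exact_mod_cast Real.sin_sq_add_cos_sq (π * θ)
  have harg : (2 * π * θ * Complex.I : ℂ) = ((2 * (π * θ) : ℝ) : ℂ) * Complex.I := by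
    push_cast; ring
  have key : Complex.exp (2 * π * θ * Complex.I) = (c ^ 2 - s ^ 2) + 2 * s * c * Complex.I := by
    rw [harg, Complex.exp_mul_I, ← Complex.ofReal_cos, ← Complex.ofReal_sin,
      Real.cos_two_mul', Real.sin_two_mul, hs, hc]; push_cast; ring
  have key2 : Complex.exp (-(2 * π * θ * Complex.I))
      = (c ^ 2 - s ^ 2) - 2 * s * c * Complex.I := by
    rw [show -(2 * π * θ * Complex.I) = ((-(2 * (π * θ)) : ℝ) : ℂ) * Complex.I by
        push_cast; ring,
      Complex.exp_mul_I, ← Complex.ofReal_cos, ← Complex.ofReal_sin,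
      Real.cos_neg, Real.sin_neg, Real.cos_two_mul', Real.sin_two_mul, hs, hc]
    push_cast; ring
  have hstar : star ![s, c] = ![s, c] := by
    funext j; fin_cases j <;>
      simp only [Fin.zero_eta, Fin.mk_one, Pi.star_apply, Matrix.cons_val_zero, Matrix.cons_val_one, Matrix.head_cons,
        hs, hc, Complex.star_def, Complex.conj_ofReal]
  rw [hstar]
  constructor <;> funext i <;> fin_cases i <;>
    simp only [Matrix.mulVec, Matrix.mul_apply, Matrix.vecMulVec_apply, Matrix.one_apply,
      dotProduct, Fin.sum_univ_two, Matrix.sub_apply, Matrix.smul_apply, Pi.smul_apply,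
      Matrix.cons_val_zero, Matrix.cons_val_one, Matrix.head_cons, Matrix.head_fin_const,
      Matrix.of_apply, Matrix.cons_val', Matrix.empty_val', Matrix.cons_val_fin_one,
      smul_eq_mul, if_true, if_false, key, key2, Fin.isValue, ne_eq,
      Fin.mk_zero, Fin.mk_one] <;>
    norm_num <;>
    first
    | linear_combination (-k) * hsc
    | linear_combination (k * Complex.I) * hsc - (2 * s * c * k) * Complex.I_sq
    | linear_combination (-(k * Complex.I)) * hsc - (2 * s * c * k) * Complex.I_sq
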